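/- Let a, b be nonzero elements of a unital C*-algebra A. Then the left Gateaux derivative of the numerical radius norm satisfies ρ₋^v(a,b) = min{ Re(conj(φ(a))·φ(b)) : φ a state on A with |φ(a)| = v(a) }, and the minimum is attained. -/

import Mathlib

open scoped ComplexOrder

/-- A state on a unital C*-algebra: a positive linear functional with `φ 1 = 1` and norm 1. -/
def IsState (A : Type*) [CStarAlgebra A] (φ : A →L[ℂ] ℂ) : Prop :=
  (∀ a : A, 0 ≤ φ (star a * a)) ∧ φ 1 = 1 ∧ ‖φ‖ = 1

/-- The numerical radius `v(a) = sup {|φ(a)| : φ a state}`. -/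
noncomputable def nr {A : Type*} [CStarAlgebra A] (a : A) : ℝ :=
  sSup {r : ℝ | ∃ φ : A →L[ℂ] ℂ, IsState A φ ∧ r = ‖φ a‖}

/-- The numerical radius Crawford number `C(b) = inf {|φ(b)| : φ a state}`. -/
noncomputable def crawford {A : Type*} [CStarAlgebra A] (b : A) : ℝ :=
  sInf {r : ℝ | ∃ φ : A →L[ℂ] ℂ, IsState A φ ∧ r = ‖φ b‖}

/-- Numerical radius Birkhoff--James orthogonality: `v(a + λ b) ≥ v(a)` for all `λ ∈ ℂ`. -/
def nrOrth {A : Type*} [CStarAlgebra A] (a b : A) : Prop :=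
  ∀ lam : ℂ, nr a ≤ nr (a + lam • b)

/-- Birkhoff--James orthogonality: `‖a + λ b‖ ≥ ‖a‖` for all `λ ∈ ℂ`. -/
def bjOrth {A : Type*} [CStarAlgebra A] (a b : A) : Prop :=
  ∀ lam : ℂ, ‖a‖ ≤ ‖a + lam • b‖

variable {A : Type*} [CStarAlgebra A]

namespace Stmt12Aux
open Complex Filter Topology

lemma im_eq_zero [Nontrivial A] (φ : A →L[ℂ] ℂ) (hn : ‖φ‖ ≤ 1) (h1 : φ 1 = 1)
    {x : A} (hx : IsSelfAdjoint x) : (φ x).im = 0 := by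
  by_contra hβ
  set β := (φ x).im with hβdef
  have key : ∀ s : ℝ, ‖φ x‖ ^ 2 + 2*β*s ≤ ‖x‖^2 := by
    intro s
    set c : ℂ := (s : ℂ) * Complex.I with hc
    have hφy : φ (x + c • 1) = φ x + c := by
      simp [map_add, map_smul, h1]
    have hstar : star (x + c • (1:A)) = x - c • 1 := by
      simp [star_smul, hx.star_eq, hc, Complex.star_def, map_mul, Complex.conj_I,
        Complex.conj_ofReal]
      module
    have expand : (x - c • (1:A)) * (x + c • 1) = x*x + (s^2 : ℝ) • 1 := by
      have hcc : c * c = -((s:ℂ)^2) := by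
        rw [hc]; ring_nf; simp [Complex.I_sq]
      rw [sub_mul, mul_add, mul_add, smul_mul_assoc, smul_mul_assoc, mul_smul_comm]
      rw [mul_one, one_mul, one_mul, smul_smul, hcc]
      have h9 : (-((s:ℂ)^2)) • (1:A) = -(((s^2:ℝ) : ℂ) • 1) := by push_cast; module
      have h10 : ((s^2:ℝ) : ℂ) • (1:A) = (s^2 : ℝ) • 1 := by rw [← Complex.coe_smul]
      rw [h9, h10]; abel
    have hxx : ‖x*x‖ = ‖x‖^2 := by
      rw [show x*x = star x * x by rw [hx.star_eq], CStarRing.norm_star_mul_self]; ring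
    have hnormy : ‖x + c • (1:A)‖^2 ≤ ‖x‖^2 + s^2 := by
      have h1' : ‖x + c • (1:A)‖^2 = ‖star (x + c • (1:A)) * (x + c • (1:A))‖ := by
        rw [CStarRing.norm_star_mul_self]; ring
      rw [h1', hstar, expand]
      have h2' : ‖x*x + (s^2:ℝ) • (1:A)‖ ≤ ‖x*x‖ + ‖(s^2:ℝ) • (1:A)‖ := norm_add_le _ _
      rw [norm_smul, norm_one, hxx, Real.norm_eq_abs, _root_.abs_of_nonneg (sq_nonneg s)] at h2'
      linarith
    have habs : ‖φ (x + c • 1)‖ ≤ ‖x + c • (1:A)‖ := by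
      calc ‖φ (x + c • 1)‖ = ‖φ (x + c • 1)‖ := rfl
        _ ≤ ‖φ‖ * ‖x + c • (1:A)‖ := φ.le_opNorm _
        _ ≤ 1 * ‖x + c • (1:A)‖ := mul_le_mul_of_nonneg_right hn (norm_nonneg _)
        _ = ‖x + c • (1:A)‖ := one_mul _
    have hsq : ‖φ x + c‖ ^ 2 = ‖φ x‖^2 + 2*β*s + s^2 := by
      rw [Complex.sq_norm, Complex.sq_norm, Complex.normSq_add]
      simp [hc, Complex.normSq_apply, Complex.mul_re, Complex.conj_re, Complex.conj_im, hβdef]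
      ring
    have h20 : ‖φ (x + c • 1)‖ ^ 2 ≤ ‖x + c • (1:A)‖^2 :=
      pow_le_pow_left₀ (norm_nonneg _) habs 2
    rw [hφy, hsq] at h20
    linarith
  have h2β : (2*β) ≠ 0 := by simpa using hβ
  have := key ((‖x‖^2 - ‖φ x‖^2 + 1)/(2*β))
  rw [mul_div_cancel₀ _ h2β] at this
  linarith

lemma pos_of_unital_contraction [Nontrivial A] (φ : A →L[ℂ] ℂ) (hn : ‖φ‖ ≤ 1) (h1 : φ 1 = 1)
    (a : A) : 0 ≤ φ (star a * a) := by
  letI := CStarAlgebra.spectralOrder A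
  haveI := CStarAlgebra.spectralOrderedRing A
  set x := star a * a with hxdef
  have hx : IsSelfAdjoint x := IsSelfAdjoint.star_mul_self a
  have him : (φ x).im = 0 := im_eq_zero φ hn h1 hx
  have hxpos : (0:A) ≤ x := star_mul_self_nonneg a
  have hle : x ≤ algebraMap ℝ A ‖x‖ := hx.le_algebraMap_norm_self
  have hsub : ‖algebraMap ℝ A ‖x‖ - x‖ ≤ ‖x‖ := by
    have h0 : (0:A) ≤ algebraMap ℝ A ‖x‖ - x := sub_nonneg.2 hle
    have h1' : algebraMap ℝ A ‖x‖ - x ≤ algebraMap ℝ A ‖x‖ := sub_le_self _ hxpos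
    calc ‖algebraMap ℝ A ‖x‖ - x‖ ≤ ‖algebraMap ℝ A ‖x‖‖ :=
          CStarAlgebra.norm_le_norm_of_nonneg_of_le h0 h1'
      _ = ‖x‖ := by rw [norm_algebraMap', Real.norm_eq_abs, _root_.abs_of_nonneg (norm_nonneg _)]
  have hφalg : φ (algebraMap ℝ A ‖x‖ - x) = (‖x‖ : ℂ) - φ x := by
    rw [map_sub]
    congr 1
    rw [Algebra.algebraMap_eq_smul_one, ← Complex.coe_smul, map_smul, h1, smul_eq_mul, mul_one]
  have habs : ‖(‖x‖:ℂ) - φ x‖ ≤ ‖x‖ := by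
    rw [← hφalg]
    calc ‖φ (algebraMap ℝ A ‖x‖ - x)‖ = ‖φ (algebraMap ℝ A ‖x‖ - x)‖ := rfl
      _ ≤ ‖φ‖ * ‖algebraMap ℝ A ‖x‖ - x‖ := φ.le_opNorm _
      _ ≤ 1 * ‖x‖ := mul_le_mul hn hsub (norm_nonneg _) zero_le_one
      _ = ‖x‖ := one_mul _
  have hre : 0 ≤ (φ x).re := by
    have : ((‖x‖:ℂ) - φ x) = ((‖x‖ - (φ x).re : ℝ) : ℂ) := by
      apply Complex.ext <;> simp [him]
    rw [this, Complex.norm_real, Real.norm_eq_abs] at habs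
    have := abs_le.1 habs
    linarith [this.2]
  rw [Complex.le_def]
  constructor
  · simpa using hre
  · simp [him]

lemma exists_state [Nontrivial A] : ∃ φ : A →L[ℂ] ℂ, IsState A φ := by
  obtain ⟨g, hg1, hg2⟩ := exists_dual_vector ℂ (1:A) (norm_ne_zero_iff.2 one_ne_zero)
  refine ⟨g, pos_of_unital_contraction g hg1.le ?_, ?_, hg1⟩
  · rw [hg2, norm_one]; norm_num
  · rw [hg2, norm_one]; norm_num

section Part2
open Metric Set

variable (A) in
/-- The state space inside the weak-* dual. -/
def SS : Set (WeakDual ℂ A) := {φ | IsState A (WeakDual.toStrongDual φ)}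

lemma mem_SS_iff (φ : A →L[ℂ] ℂ) : (φ : WeakDual ℂ A) ∈ SS A ↔ IsState A φ := Iff.rfl

lemma isClosed_nonnegC : IsClosed {z : ℂ | 0 ≤ z} := by
  have : {z : ℂ | 0 ≤ z} = {z : ℂ | 0 ≤ z.re} ∩ {z : ℂ | z.im = 0} := by
    ext z
    simp [Complex.le_def, eq_comm]
  rw [this]
  exact (isClosed_le continuous_const Complex.continuous_re).inter
    (isClosed_eq Complex.continuous_im continuous_const)

lemma SS_eq [Nontrivial A] :
    SS A = ({φ : WeakDual ℂ A | ∀ a : A, 0 ≤ φ (star a * a)} ∩ {φ | φ 1 = 1}) ∩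
      (WeakDual.toStrongDual ⁻¹' closedBall 0 1) := by
  ext φ
  constructor
  · rintro ⟨hpos, h1, hn⟩
    refine ⟨⟨hpos, h1⟩, ?_⟩
    rw [Set.mem_preimage, Metric.mem_closedBall, dist_zero_right]
    exact hn.le
  · rintro ⟨⟨hpos, h1⟩, hn⟩
    simp only [mem_preimage, mem_closedBall, dist_zero_right] at hn
    refine ⟨hpos, h1, le_antisymm hn ?_⟩
    have h2 := (WeakDual.toStrongDual φ).le_opNorm 1
    rw [show (WeakDual.toStrongDual φ) (1:A) = φ 1 from rfl, h1,
      show ‖(1:A)‖ = 1 from norm_one, mul_one] at h2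
    simpa using h2

lemma isCompact_SS [Nontrivial A] : IsCompact (SS A) := by
  rw [SS_eq]
  refine (WeakDual.isCompact_closedBall (𝕜 := ℂ) (0 : StrongDual ℂ A) 1).inter_left (IsClosed.inter ?_ ?_)
  · have : {φ : WeakDual ℂ A | ∀ a : A, 0 ≤ φ (star a * a)} =
        ⋂ a : A, (fun φ : WeakDual ℂ A => φ (star a * a)) ⁻¹' {z : ℂ | 0 ≤ z} := by
      ext φ; simp
    rw [this]
    exact isClosed_iInter fun a => isClosed_nonnegC.preimage (WeakDual.eval_continuous _)
  · exact isClosed_eq (WeakDual.eval_continuous 1) continuous_const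

lemma SS_nonempty [Nontrivial A] : (SS A).Nonempty :=
  (exists_state (A := A)).imp fun _ h => h

end Part2

section Part3
variable [Nontrivial A]

lemma continuous_absEval (a : A) : Continuous fun φ : WeakDual ℂ A => ‖φ a‖ :=
  continuous_norm.comp (WeakDual.eval_continuous a)

lemma nr_isGreatest (a : A) :
    IsGreatest {r : ℝ | ∃ φ : A →L[ℂ] ℂ, IsState A φ ∧ r = ‖φ a‖} (nr a) := by
  obtain ⟨φ₀, hφ₀S, hmax⟩ := (isCompact_SS (A := A)).exists_isMaxOn SS_nonempty
    (continuous_absEval a).continuousOn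
  have hgr : IsGreatest {r : ℝ | ∃ φ : A →L[ℂ] ℂ, IsState A φ ∧ r = ‖φ a‖}
      (‖φ₀ a‖) := by
    constructor
    · exact ⟨WeakDual.toStrongDual φ₀, hφ₀S, rfl⟩
    · rintro r ⟨ψ, hψ, rfl⟩
      exact hmax ((mem_SS_iff ψ).2 hψ)
  have h : sSup {r : ℝ | ∃ φ : A →L[ℂ] ℂ, IsState A φ ∧ r = ‖φ a‖}
      = ‖φ₀ a‖ := hgr.csSup_eq
  unfold nr
  rw [h]
  exact hgr

lemma nr_attained (x : A) : ∃ φ : A →L[ℂ] ℂ, IsState A φ ∧ ‖φ x‖ = nr x := by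
  obtain ⟨φ, hφ, h⟩ := (nr_isGreatest x).1
  exact ⟨φ, hφ, h.symm⟩

lemma abs_le_nr {x : A} {ψ : A →L[ℂ] ℂ} (hψ : IsState A ψ) : ‖ψ x‖ ≤ nr x :=
  (nr_isGreatest x).2 ⟨ψ, hψ, rfl⟩

lemma nr_nonneg (x : A) : 0 ≤ nr x := by
  obtain ⟨φ, hφ, h⟩ := nr_attained x
  exact h ▸ norm_nonneg _

lemma state_abs_le_norm {ψ : A →L[ℂ] ℂ} (hψ : IsState A ψ) (x : A) :
    ‖ψ x‖ ≤ ‖x‖ := by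
  calc ‖ψ x‖ = ‖ψ x‖ := rfl
    _ ≤ ‖ψ‖ * ‖x‖ := ψ.le_opNorm x
    _ = ‖x‖ := by rw [hψ.2.2, one_mul]

lemma nr_lip (x y : A) : nr x ≤ nr y + ‖x - y‖ := by
  obtain ⟨φ, hφ, h⟩ := nr_attained x
  have h1 : ‖φ x‖ ≤ ‖φ y‖ + ‖φ (x - y)‖ := by
    have : φ x = φ y + φ (x - y) := by rw [← map_add]; congr 1; abel
    rw [this]
    exact norm_add_le _ _
  have h2 := state_abs_le_norm hφ (x - y)
  have h3 := abs_le_nr (x := y) hφ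
  linarith [h.symm.le, h.le]

end Part3

section Part4
open Filter Topology

lemma squeeze_abs {l : Filter ℝ} {f g : ℝ → ℝ} {L : ℝ} (hg : Tendsto g l (nhds 0))
    (h : ∀ᶠ t in l, |f t - L| ≤ g t) : Tendsto f l (nhds L) := by
  have h1 : Tendsto (fun t => L - g t) l (nhds L) := by
    simpa using tendsto_const_nhds.sub hg
  have h2 : Tendsto (fun t => L + g t) l (nhds L) := by
    simpa using tendsto_const_nhds.add hg
  refine tendsto_of_tendsto_of_tendsto_of_le_of_le' h1 h2 ?_ ?_
  · filter_upwards [h] with t ht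
    have := abs_le.1 ht
    linarith [this.1]
  · filter_upwards [h] with t ht
    have := abs_le.1 ht
    linarith [(abs_le.1 ht).2]

lemma mapClusterPt_eq_of_tendsto {α : Type*} {F : Filter α} [F.NeBot] {g : α → ℝ} {x L : ℝ}
    (h : MapClusterPt x F g) (h2 : Tendsto g F (nhds L)) : x = L := by
  have h3 : ClusterPt x (nhds L) := h.clusterPt.mono h2
  exact eq_of_nhds_neBot h3

lemma mapClusterPt_le {α : Type*} {F : Filter α} {g : α → ℝ} {x c : ℝ}
    (h : MapClusterPt x F g) (h2 : ∀ᶠ t in F, g t ≤ c) : x ≤ c := by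
  have h3 : ClusterPt x (Filter.principal (Set.Iic c)) := by
    refine h.clusterPt.mono ?_
    rw [Filter.le_principal_iff, Filter.mem_map]
    filter_upwards [h2] with t ht using ht
  have := mem_closure_iff_clusterPt.2 h3
  rwa [closure_Iic] at this

end Part4

end Stmt12Aux


open Stmt12Aux Filter Topology Set in
theorem stmt12 (a b : A) (ha : a ≠ 0) (hb : b ≠ 0) :
    ∃ φ : A →L[ℂ] ℂ, IsState A φ ∧ ‖φ a‖ = nr a ∧
      (∀ ψ : A →L[ℂ] ℂ, IsState A ψ → ‖ψ a‖ = nr a →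
        ((starRingEnd ℂ) (φ a) * φ b).re ≤ ((starRingEnd ℂ) (ψ a) * ψ b).re) ∧
      Filter.Tendsto (fun t : ℝ => (nr (a + (t : ℂ) • b) ^ 2 - nr a ^ 2) / (2 * t))
        (nhdsWithin 0 (Set.Iio 0)) (nhds (((starRingEnd ℂ) (φ a) * φ b).re)) := by
  haveI : Nontrivial A := ⟨a, 0, ha⟩
  classical
  set f1 : WeakDual ℂ A → ℝ := fun φ => ‖φ a‖ with hf1
  set f2 : WeakDual ℂ A → ℝ := fun φ => ((starRingEnd ℂ) (φ a) * φ b).re with hf2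
  have hf2c : Continuous f2 :=
    Complex.continuous_re.comp
      ((Complex.continuous_conj.comp (WeakDual.eval_continuous a)).mul
        (WeakDual.eval_continuous b))
  set M : Set (WeakDual ℂ A) := SS A ∩ f1 ⁻¹' {nr a} with hM
  have hMc : IsCompact M :=
    (isCompact_SS (A := A)).inter_right (isClosed_singleton.preimage (continuous_absEval a))
  have hMne : M.Nonempty := by
    obtain ⟨φ, hφ, h⟩ := nr_attained (A := A) a
    exact ⟨φ, (mem_SS_iff φ).2 hφ, by exact h⟩
  obtain ⟨φ₀, hφ₀M, hmin⟩ := hMc.exists_isMinOn hMne hf2c.continuousOn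
  set m := f2 φ₀ with hm
  have hφ₀S : IsState A (WeakDual.toStrongDual φ₀) := hφ₀M.1
  have hφ₀a : ‖φ₀ a‖ = nr a := hφ₀M.2
  refine ⟨WeakDual.toStrongDual φ₀, hφ₀S, hφ₀a, ?_, ?_⟩
  · intro ψ hψ hψa
    exact hmin ⟨(mem_SS_iff ψ).2 hψ, by exact hψa⟩
  · -- the limit
    set N : ℝ → ℝ := fun t => nr (a + (t:ℂ) • b) with hN
    have hex : ∀ t : ℝ, ∃ φ : A →L[ℂ] ℂ, IsState A φ ∧
        ‖φ (a + (t:ℂ) • b)‖ = nr (a + (t:ℂ) • b) := by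
      intro t
      exact nr_attained (A := A) (a + (t:ℂ) • b)
    choose u hu1 hu2 using hex
    set R : ℝ → ℝ := fun t => ((starRingEnd ℂ) (u t a) * u t b).re with hR
    -- expansion of squared modulus
    have hexp : ∀ (φ : A →L[ℂ] ℂ) (t : ℝ),
        ‖φ (a + (t:ℂ) • b)‖ ^ 2
          = ‖φ a‖^2 + 2*t*((starRingEnd ℂ) (φ a) * φ b).re
            + t^2 * ‖φ b‖^2 := by
      intro φ t
      have h0 : φ (a + (t:ℂ) • b) = φ a + (t:ℂ) * φ b := by
        simp [map_add, map_smul, smul_eq_mul]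
      rw [h0, Complex.sq_norm, Complex.sq_norm, Complex.sq_norm]
      simp only [Complex.normSq_apply, Complex.add_re, Complex.add_im, Complex.mul_re,
        Complex.mul_im, Complex.ofReal_re, Complex.ofReal_im, Complex.conj_re, Complex.conj_im]
      ring
    -- norms of values
    have hub : ∀ (t : ℝ) (x : A), ‖u t x‖ ≤ ‖x‖ :=
      fun t x => state_abs_le_norm (hu1 t) x
    have huA : ∀ t : ℝ, ‖u t a‖ ≤ nr a := fun t => abs_le_nr (hu1 t)
    have hsmulnorm : ∀ t : ℝ, ‖(t:ℂ) • b‖ = |t| * ‖b‖ := by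
      intro t
      rw [norm_smul, Complex.norm_real, Real.norm_eq_abs]
    -- N is 1-Lipschitz-ish in t
    have hNdef : ∀ t : ℝ, N t = nr (a + (t:ℂ) • b) := fun _ => rfl
    have hNlip : ∀ t : ℝ, |N t - nr a| ≤ |t| * ‖b‖ := by
      intro t
      rw [hNdef, abs_sub_le_iff]
      have h5 := nr_lip (A := A) (a + (t:ℂ) • b) a
      have h6 := nr_lip (A := A) a (a + (t:ℂ) • b)
      have h7 : a - (a + (t:ℂ) • b) = -((t:ℂ) • b) := by abel
      rw [h7, norm_neg, hsmulnorm] at h6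
      rw [show a + (t:ℂ) • b - a = (t:ℂ) • b by abel, hsmulnorm] at h5
      exact ⟨by linarith, by linarith⟩
    have habs_t : Tendsto (fun t : ℝ => |t| * ‖b‖) (𝓝[<] (0:ℝ)) (nhds 0) := by
      have h8 : Tendsto (fun t : ℝ => |t| * ‖b‖) (nhds 0) (nhds (|(0:ℝ)| * ‖b‖)) :=
        ((continuous_abs).mul continuous_const).tendsto 0
      simpa using h8.mono_left nhdsWithin_le_nhds
    have htendN : Tendsto N (𝓝[<] (0:ℝ)) (nhds (nr a)) :=
      squeeze_abs habs_t (Eventually.of_forall hNlip)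
    -- f1 ∘ u tends to nr a
    have hf1u : ∀ t : ℝ, |f1 (u t) - nr a| ≤ 2 * (|t| * ‖b‖) := by
      intro t
      have h9 : |‖u t a‖ - ‖u t (a + (t:ℂ) • b)‖|
          ≤ ‖u t a - u t (a + (t:ℂ) • b)‖ :=
        abs_norm_sub_norm_le _ _
      have h10 : u t a - u t (a + (t:ℂ) • b) = u t (-((t:ℂ) • b)) := by
        rw [← map_sub]; congr 1; abel
      have h11 : ‖u t (-((t:ℂ) • b))‖ ≤ |t| * ‖b‖ := by
        calc ‖u t (-((t:ℂ) • b))‖ ≤ ‖-((t:ℂ) • b)‖ := hub t _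
          _ = |t| * ‖b‖ := by rw [norm_neg, hsmulnorm]
      rw [h10] at h9
      have h12 := hNlip t
      have h13 : f1 (u t) = ‖u t a‖ := rfl
      have h14 : ‖u t (a + (t:ℂ) • b)‖ = N t := hu2 t
      rw [h13]
      rw [h14] at h9
      have := abs_sub_le (‖u t a‖) (N t) (nr a)
      calc |‖u t a‖ - nr a| ≤ |‖u t a‖ - N t| + |N t - nr a| :=
            abs_sub_le _ _ _
        _ ≤ (|t| * ‖b‖) + (|t| * ‖b‖) := add_le_add (le_trans h9 h11) h12
        _ = 2 * (|t| * ‖b‖) := by ring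
    have htendf1 : Tendsto (fun t => f1 (u t)) (𝓝[<] (0:ℝ)) (nhds (nr a)) := by
      refine squeeze_abs (g := fun t => 2 * (|t| * ‖b‖)) ?_ (Eventually.of_forall hf1u)
      simpa using habs_t.const_mul 2
    -- key inequalities
    have hbpos : (0:ℝ) < ‖b‖^2 := by
      have := norm_pos_iff.2 hb
      positivity
    have hbound : ∀ t : ℝ, t < 0 →
        (N t^2 - nr a^2)/(2*t) ≤ m + (t/2) * ‖φ₀ b‖^2 ∧
        R t + (t/2) * ‖b‖^2 ≤ (N t^2 - nr a^2)/(2*t) := by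
      intro t ht
      have h2t : 2*t < 0 := by linarith
      constructor
      · have hkey : nr a^2 + 2*t*m + t^2 * ‖φ₀ b‖^2 ≤ N t ^ 2 := by
          have h15 := hexp (WeakDual.toStrongDual φ₀) t
          have h16 : ‖(WeakDual.toStrongDual φ₀) (a + (t:ℂ) • b)‖ ≤ N t := by
            rw [hNdef]
            exact abs_le_nr hφ₀S
          have h17 : ‖(WeakDual.toStrongDual φ₀) (a + (t:ℂ) • b)‖^2 ≤ N t ^ 2 :=
            pow_le_pow_left₀ (norm_nonneg _) h16 2
          have h18 : ‖(WeakDual.toStrongDual φ₀) a‖ = nr a := hφ₀a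
          rw [h15, h18] at h17
          exact h17
        rw [div_le_iff_of_neg h2t]
        have h19 : (m + t/2 * ‖φ₀ b‖^2) * (2*t)
            = 2*t*m + t^2 * ‖φ₀ b‖^2 := by ring
        rw [h19]
        linarith
      · have hkey2 : N t^2 ≤ nr a^2 + 2*t*(R t) + t^2 * ‖b‖^2 := by
          have h20 := hexp (u t) t
          have h21 : N t ^ 2 = ‖u t (a + (t:ℂ) • b)‖^2 := by rw [hNdef, hu2]
          rw [h21, h20]
          have h22 : ‖u t a‖^2 ≤ nr a^2 :=
            pow_le_pow_left₀ (norm_nonneg _) (huA t) 2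
          have h23 : t^2 * ‖u t b‖^2 ≤ t^2 * ‖b‖^2 :=
            mul_le_mul_of_nonneg_left
              (pow_le_pow_left₀ (norm_nonneg _) (hub t b) 2) (sq_nonneg t)
          have h24 : (2:ℝ)*t*((starRingEnd ℂ) (u t a) * u t b).re = 2*t*(R t) := rfl
          rw [h24]
          linarith
        rw [le_div_iff_of_neg h2t]
        have h25 : (R t + t/2 * ‖b‖^2) * (2*t) = 2*t*(R t) + t^2 * ‖b‖^2 := by ring
        rw [h25]
        linarith
    -- conclude via order convergence
    have hgoal : Tendsto (fun t : ℝ => (N t ^ 2 - nr a ^ 2) / (2 * t)) (𝓝[<] (0:ℝ)) (nhds m) := by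
      rw [tendsto_order]
      constructor
      · intro c hc
        set ε := (m - c)/2 with hε
        have hεpos : 0 < ε := by rw [hε]; linarith
        have claimA : ∀ᶠ t in 𝓝[<] (0:ℝ), m - ε < R t := by
          by_contra hcon
          rw [Filter.not_eventually] at hcon
          have hfreq : ∃ᶠ t in 𝓝[<] (0:ℝ), R t ≤ m - ε :=
            hcon.mono fun t ht => not_lt.1 ht
          set F := (𝓝[<] (0:ℝ)) ⊓ Filter.principal {t | R t ≤ m - ε} with hF
          haveI hFne : F.NeBot := Filter.frequently_iff_neBot.1 hfreq
          have hmapF : Filter.map (β := WeakDual ℂ A) (fun t => (u t : WeakDual ℂ A)) F ≤ Filter.principal (SS A) := by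
            rw [Filter.le_principal_iff]; apply Filter.mem_map.2
            exact Filter.univ_mem' fun t => (mem_SS_iff (u t)).2 (hu1 t)
          obtain ⟨ψ, hψS, hψcl⟩ := (isCompact_SS (A := A)).exists_mapClusterPt hmapF
          have hcl1 : MapClusterPt (f1 ψ) F (fun t => f1 (u t)) :=
            hψcl.continuousAt_comp (continuous_absEval a).continuousAt
          have hψa : f1 ψ = nr a :=
            mapClusterPt_eq_of_tendsto hcl1 (htendf1.mono_left inf_le_left)
          have hψM : ψ ∈ M := ⟨hψS, hψa⟩
          have h26 : m ≤ f2 ψ := hmin hψM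
          have hcl2 : MapClusterPt (f2 ψ) F (fun t => f2 (u t)) :=
            hψcl.continuousAt_comp hf2c.continuousAt
          have h27 : f2 ψ ≤ m - ε := by
            refine mapClusterPt_le hcl2 ?_
            have : {t : ℝ | R t ≤ m - ε} ∈ F := by
              rw [hF]
              exact Filter.mem_inf_of_right (Filter.mem_principal_self _)
            filter_upwards [this] with t ht using ht
          linarith
        have claimB : ∀ᶠ t in 𝓝[<] (0:ℝ), -ε < (t/2) * ‖b‖^2 := by
          have h28 : Tendsto (fun t : ℝ => (t/2) * ‖b‖^2) (𝓝[<] (0:ℝ)) (nhds 0) := by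
            have h29 : Tendsto (fun t : ℝ => (t/2) * ‖b‖^2) (nhds 0)
                (nhds ((0/2) * ‖b‖^2)) :=
              ((continuous_id.div_const 2).mul continuous_const).tendsto 0
            simpa using h29.mono_left nhdsWithin_le_nhds
          exact h28.eventually (eventually_gt_nhds (by linarith))
        filter_upwards [claimA, claimB, self_mem_nhdsWithin] with t hA hB ht
        have h30 := (hbound t ht).2
        have : c = m - 2*ε := by rw [hε]; ring
        rw [this]
        calc m - 2*ε < R t + (t/2) * ‖b‖^2 := by linarith
          _ ≤ (N t^2 - nr a^2)/(2*t) := h30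
      · intro c hc
        filter_upwards [self_mem_nhdsWithin] with t ht
        have h31 := (hbound t ht).1
        have h32 : (t/2) * ‖φ₀ b‖^2 ≤ 0 :=
          mul_nonpos_of_nonpos_of_nonneg (by linarith [show (t:ℝ) < 0 from ht])
            (sq_nonneg _)
        calc (N t^2 - nr a^2)/(2*t) ≤ m + (t/2) * ‖φ₀ b‖^2 := h31
          _ ≤ m := by linarith
          _ < c := hc
    exact hgoal
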